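/- With C_{KK} = (1+ρ)I_S - ρJ_S (unit diagonal, off-diagonal entries -ρ, 0 ≤ ρ < 1/(S-1)) and C_{jK} = -ρ 1_S^T, the scalar C_{jK}(C_{KK})^{-1}(-1_S) = ρS/(1 + ρ - ρS), and this quantity is ≥ 1 if and only if ρ ≥ 1/(2S-1). -/

import Mathlib

open Matrix

theorem lasso_bound_tight (S : ℕ) (hS : 1 ≤ S) (ρ : ℝ)
    (hρ0 : 0 ≤ ρ) (hρ : ρ * ((S : ℝ) - 1) < 1)
    (CKK : Matrix (Fin S) (Fin S) ℝ)
    (hCKK : CKK = (1 + ρ) • (1 : Matrix (Fin S) (Fin S) ℝ)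
        - ρ • Matrix.of (fun _ _ => (1 : ℝ)))
    (CjK : Fin S → ℝ) (hCjK : CjK = fun _ => -ρ) :
    CjK ⬝ᵥ CKK⁻¹.mulVec (fun _ => (-1 : ℝ)) = ρ * S / (1 + ρ - ρ * S) ∧
      (1 ≤ CjK ⬝ᵥ CKK⁻¹.mulVec (fun _ => (-1 : ℝ)) ↔
        1 / (2 * (S : ℝ) - 1) ≤ ρ) := by
  have hS1 : (1:ℝ) ≤ (S:ℝ) := by exact_mod_cast hS
  set a : ℝ := 1 + ρ with ha
  set d : ℝ := 1 + ρ - ρ * S with hd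
  have hdpos : 0 < d := by nlinarith
  have hapos : 0 < a := by nlinarith
  set c : ℝ := ρ / (a * d) with hc
  set B : Matrix (Fin S) (Fin S) ℝ :=
    (1/a) • (1 : Matrix (Fin S) (Fin S) ℝ) + c • Matrix.of (fun _ _ => 1) with hB
  have hright : CKK * B = 1 := by
    ext i j
    simp [hCKK, hB, Matrix.mul_apply, Matrix.one_apply, mul_ite, ite_mul,
      Finset.sum_add_distrib, Finset.sum_ite_eq, Finset.sum_sub_distrib,
      Finset.mul_sum, Finset.sum_ite_eq', mul_add, sub_mul]
    rw [hc, hd, ha]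
    have h1 : (1:ℝ)+ρ ≠ 0 := by positivity
    have h2 : (1:ℝ)+ρ-ρ*S ≠ 0 := ne_of_gt hdpos
    split_ifs <;> field_simp <;> ring
  have hinv : CKK⁻¹ = B := Matrix.inv_eq_right_inv hright
  have hmain : CjK ⬝ᵥ CKK⁻¹.mulVec (fun _ => (-1 : ℝ)) = ρ * S / d := by
    rw [hinv, hCjK]
    simp [dotProduct, Matrix.mulVec, hB, Matrix.one_apply, mul_ite, ite_mul,
      Finset.sum_add_distrib, Finset.sum_ite_eq, Finset.sum_ite_eq',
      Finset.mul_sum, mul_add]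
    rw [hc, hd, ha]
    have h1 : (1:ℝ)+ρ ≠ 0 := by positivity
    have h2 : (1:ℝ)+ρ-ρ*S ≠ 0 := ne_of_gt hdpos
    field_simp
    rw [← sub_eq_zero]
    field_simp
    ring
  refine ⟨hmain, ?_⟩
  rw [hmain]
  have h2S : (0:ℝ) < 2 * (S:ℝ) - 1 := by linarith
  rw [div_le_iff₀ h2S, le_div_iff₀ hdpos]
  constructor <;> intro h <;> nlinarith
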